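/- (Splitting LFSR sequences.) Let q be a prime power, ℓ ≥ 1, and let k be an integer with ℓ ≤ k ≤ (q^ℓ − 1)/(q − 1). Then there exists an ℓ-valid (q,k)-colouring of q − 1 eBugs; that is, E(q,k,ℓ) ≥ q − 1. -/

import Mathlib

/-- A `(q,k)`-colouring of `n` eBugs is `ℓ`-valid if its `ℓ`-window map is injective. -/
def ebugValid (q k ℓ n : ℕ) (c : Fin n → ZMod k → Fin q) : Prop :=
  Function.Injective (fun p : Fin n × ZMod k => fun s : Fin ℓ => c p.1 (p.2 + (s : ℕ)))

/-- The eBug number `E(q,k,ℓ)`: the greatest `n` admitting an `ℓ`-valid `(q,k)`-colouring. -/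
noncomputable def eBugNumber (q k ℓ : ℕ) : ℕ :=
  sSup {n : ℕ | ∃ c : Fin n → ZMod k → Fin q, ebugValid q k ℓ n c}

open Polynomial in
lemma ebug_span_top_of_gen {K F : Type*} [Field K] [Field F] [Algebra K F]
    [FiniteDimensional K F] (g : F) (ℓ : ℕ) (hrank : Module.finrank K F = ℓ)
    (hgen : ∀ x : F, x ≠ 0 → ∃ n : ℕ, g ^ n = x) :
    Submodule.span K (Set.range fun i : Fin ℓ => g ^ (i : ℕ)) = ⊤ := by
  have hint : IsIntegral K g := IsIntegral.of_finite K g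
  have hadj : Algebra.adjoin K {g} = ⊤ := by
    rw [eq_top_iff]
    rintro x -
    by_cases hx : x = 0
    · exact hx ▸ zero_mem _
    · obtain ⟨n, rfl⟩ := hgen x hx
      exact pow_mem (Algebra.subset_adjoin (Set.mem_singleton g)) n
  have hd : (minpoly K g).natDegree ≤ ℓ := hrank ▸ minpoly.natDegree_le g
  have hspan := Submodule.span_range_natDegree_eq_adjoin (minpoly.monic hint) (minpoly.aeval K g)
  rw [hadj, Algebra.top_toSubmodule] at hspan
  rw [eq_top_iff, ← hspan]
  apply Submodule.span_mono
  intro x hx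
  simp only [Finset.coe_image, Set.mem_image, Finset.mem_coe, Finset.mem_range] at hx
  obtain ⟨i, hi, rfl⟩ := hx
  exact ⟨⟨i, lt_of_lt_of_le hi hd⟩, rfl⟩

set_option maxHeartbeats 2000000 in
set_option synthInstance.maxHeartbeats 1000000 in
open Polynomial in
lemma ebug_exists_colouring (q k ℓ : ℕ) (hq : IsPrimePow q) (hℓ : 1 ≤ ℓ) (hkl : ℓ ≤ k)
    (hk : k ≤ (q ^ ℓ - 1) / (q - 1)) :
    ∃ c : Fin (q - 1) → ZMod k → Fin q, ebugValid q k ℓ (q - 1) c := by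
  classical
  have hq2 : 2 ≤ q := hq.two_le
  have hk1 : 1 ≤ k := le_trans hℓ hkl
  haveI : NeZero k := ⟨by omega⟩
  set m : ℕ := (q ^ ℓ - 1) / (q - 1) with hm_def
  have hdvd1 : (q - 1) ∣ q ^ ℓ - 1 := by
    simpa using Nat.sub_dvd_pow_sub_pow q 1 ℓ
  have hNm : (q - 1) * m = q ^ ℓ - 1 := Nat.mul_div_cancel' hdvd1
  have hqlpos : 2 ≤ q ^ ℓ := by
    calc 2 = 2 ^ 1 := by norm_num
    _ ≤ q ^ ℓ := Nat.pow_le_pow_left hq2 ℓ |>.trans' (Nat.pow_le_pow_right (by omega) hℓ)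
  obtain ⟨p, e, hp, he, hpe⟩ := hq
  haveI : Fact p.Prime := ⟨Nat.prime_iff.mpr hp⟩
  set F := GaloisField p (e * ℓ) with hF_def
  haveI : Fintype F := Fintype.ofFinite F
  have hcardF : Fintype.card F = q ^ ℓ := by
    have h := GaloisField.card p (e * ℓ) (Nat.mul_ne_zero (by omega) (by omega))
    rw [← Nat.card_eq_fintype_card, h, ← hpe, pow_mul]
  have h1F : 1 < Fintype.card F := by rw [hcardF]; omega
  have hq1 : 1 < q := hq2
  -- the subfield with q elements
  have hqchar : q = p ^ e := hpe.symm
  let K : Subfield F :=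
    { carrier := {x : F | x ^ q = x}
      mul_mem' := fun {a b} ha hb => by
        simp only [Set.mem_setOf_eq] at *
        rw [mul_pow, ha, hb]
      one_mem' := by simp [Set.mem_setOf_eq]
      add_mem' := fun {a b} ha hb => by
        simp only [Set.mem_setOf_eq] at *
        rw [hqchar, add_pow_char_pow, ← hqchar, ha, hb]
      zero_mem' := by
        simp only [Set.mem_setOf_eq]
        exact zero_pow (by omega)
      neg_mem' := fun {a} ha => by
        simp only [Set.mem_setOf_eq] at *
        rw [neg_pow, ha, hqchar, neg_one_pow_char_pow]
        ring
      inv_mem' := fun a ha => by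
        simp only [Set.mem_setOf_eq] at *
        rw [inv_pow, ha] }
  have hmemK : ∀ x : F, x ∈ K ↔ x ^ q = x := fun x => Iff.rfl
  haveI : Fintype K := Fintype.ofFinite K
  -- cardinality of K
  have hPne : (X ^ q - X : Polynomial F) ≠ 0 := FiniteField.X_pow_card_sub_X_ne_zero F hq1
  have hsep : (X ^ q - X : Polynomial F).Separable :=
    galois_poly_separable p q (hqchar ▸ dvd_pow_self p (by omega : e ≠ 0))
  have hdeg : (X ^ q - X : Polynomial F).natDegree = q :=
    FiniteField.X_pow_card_sub_X_natDegree_eq F hq1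
  have hdvdP : (X ^ q - X : Polynomial F) ∣ X ^ (q ^ ℓ) - X := by
    have h1 : (X ^ (q - 1) - 1 : Polynomial F) ∣ X ^ (q ^ ℓ - 1) - 1 := by
      have h2 : (X ^ (q ^ ℓ - 1) - 1 : Polynomial F) = (X ^ (q - 1)) ^ m - 1 ^ m := by
        rw [← pow_mul, one_pow, hNm]
      rw [h2]
      exact sub_dvd_pow_sub_pow _ 1 m
    have e1 : (X ^ q - X : Polynomial F) = X * (X ^ (q - 1) - 1) := by
      rw [mul_sub, mul_one]
      congr 1
      rw [← pow_succ']
      congr 1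
      omega
    have e2 : (X ^ (q ^ ℓ) - X : Polynomial F) = X * (X ^ (q ^ ℓ - 1) - 1) := by
      rw [mul_sub, mul_one]
      congr 1
      rw [← pow_succ']
      congr 1
      omega
    rw [e1, e2]
    exact mul_dvd_mul_left X h1
  have hsplitBig : Splits (X ^ (q ^ ℓ) - X : Polynomial F) := by
    rw [← hcardF, splits_iff_card_roots, FiniteField.roots_X_pow_card_sub_X F,
      FiniteField.X_pow_card_sub_X_natDegree_eq F h1F, ← Finset.card_def, Finset.card_univ]
  have hsplitP : Splits (X ^ q - X : Polynomial F) :=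
    Splits.of_dvd hsplitBig (by rw [← hcardF]; exact FiniteField.X_pow_card_sub_X_ne_zero F h1F)
      hdvdP
  have hcardK : Fintype.card K = q := by
    have hroots := Polynomial.card_rootSet_eq_natDegree (p := (X ^ q - X : Polynomial F)) hsep
      (by rwa [Algebra.algebraMap_self, Polynomial.map_id])
    rw [hdeg] at hroots
    rw [← hroots]
    apply Fintype.card_congr
    apply Equiv.subtypeEquivRight
    intro x
    rw [Polynomial.mem_rootSet_of_ne hPne, hmemK]
    simp [sub_eq_zero]
  haveI : FiniteDimensional K F := Module.Finite.of_finite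
  have hrank : Module.finrank K F = ℓ := by
    have hcards : Fintype.card F = Fintype.card K ^ Module.finrank K F := Module.card_eq_pow_finrank
    rw [hcardF, hcardK] at hcards
    exact (Nat.pow_right_injective hq2 hcards.symm)
  -- generator of the multiplicative group
  obtain ⟨gu, hgu⟩ := IsCyclic.exists_generator (α := Fˣ)
  have horder : orderOf gu = q ^ ℓ - 1 := by
    rw [orderOf_eq_card_of_forall_mem_zpowers hgu, Nat.card_eq_fintype_card,
      Fintype.card_units, hcardF]
  set g : F := (gu : F) with hg_def
  have hlam1 : gu ^ (m * (q - 1)) = 1 := by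
    rw [show m * (q - 1) = q ^ ℓ - 1 by rw [mul_comm]; exact hNm, ← horder]
    exact pow_orderOf_eq_one gu
  have hlam_memK : ((gu : F) ^ m) ∈ K := by
    rw [hmemK]
    have h' : (gu ^ m) ^ q = gu ^ m := by
      have hq' : q = 1 + (q - 1) := by omega
      calc (gu ^ m) ^ q = (gu ^ m) ^ 1 * (gu ^ m) ^ (q - 1) := by rw [← pow_add, ← hq']
      _ = gu ^ m * gu ^ (m * (q - 1)) := by rw [pow_one, ← pow_mul]
      _ = gu ^ m := by rw [hlam1, mul_one]
    have := congrArg (Units.val) h'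
    rw [Units.val_pow_eq_pow_val, Units.val_pow_eq_pow_val] at this
    exact this
  set μ : K := (⟨(gu : F) ^ m, hlam_memK⟩ : K) with hμ_def
  -- nonzero linear functional
  have hℓrank : 0 < Module.finrank K F := by omega
  let b := Module.finBasis K F
  let i0 : Fin (Module.finrank K F) := ⟨0, hℓrank⟩
  let T : F →ₗ[K] K := b.coord i0
  have hT1 : T (b i0) = 1 := by
    simp only [T, Module.Basis.coord_apply, Module.Basis.repr_self, Finsupp.single_eq_same]
  -- the span lemma
  have hgen : ∀ x : F, x ≠ 0 → ∃ n : ℕ, g ^ n = x := by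
    intro x hx
    have hmem := hgu (Units.mk0 x hx)
    rw [← mem_powers_iff_mem_zpowers] at hmem
    obtain ⟨n, hn⟩ := hmem
    refine ⟨n, ?_⟩
    have := congrArg (Units.val) hn
    rw [Units.val_pow_eq_pow_val] at this
    exact this
  have hspan := ebug_span_top_of_gen g ℓ hrank hgen
  -- key injectivity lemma
  have hA : ∀ z : F, (∀ s : ℕ, s < ℓ → T (g ^ s * z) = 0) → z = 0 := by
    intro z hz
    by_contra hz0
    have hL : (T.comp (LinearMap.mulRight K z)) = 0 := by
      apply LinearMap.ext_on hspan
      rintro x ⟨i, rfl⟩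
      rw [LinearMap.comp_apply, LinearMap.mulRight_apply, LinearMap.zero_apply]
      exact hz i i.isLt
    have h0 : T (b i0) = 0 := by
      have h := LinearMap.congr_fun hL (b i0 * z⁻¹)
      rw [LinearMap.comp_apply, LinearMap.mulRight_apply, LinearMap.zero_apply, mul_assoc,
        inv_mul_cancel₀ hz0, mul_one] at h
      exact h
    rw [hT1] at h0
    have h1 : (1 : F) = 0 := congrArg Subtype.val h0
    exact one_ne_zero h1
  -- seam element
  have hseam : ∃ v : F, v ≠ 0 ∧ ∀ t : ℕ, t < ℓ - 1 → T (g ^ t * ((g ^ k - 1) * v)) = 0 := by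
    by_cases hgk : (g : F) ^ k = 1
    · refine ⟨1, one_ne_zero, fun t ht => ?_⟩
      rw [hgk, sub_self, zero_mul, mul_zero, map_zero]
    · have hlt : Fintype.card (Fin (ℓ - 1) → K) < Fintype.card F := by
        rw [Fintype.card_fun, Fintype.card_fin, hcardK, hcardF]
        exact Nat.pow_lt_pow_right hq1 (by omega)
      obtain ⟨x, y, hxy, hΦ⟩ := Fintype.exists_ne_map_eq_of_card_lt
        (fun (x : F) (t : Fin (ℓ - 1)) => T (g ^ (t : ℕ) * x)) hlt
      refine ⟨(g ^ k - 1)⁻¹ * (x - y), mul_ne_zero (inv_ne_zero (sub_ne_zero.mpr hgk))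
        (sub_ne_zero.mpr hxy), ?_⟩
      intro t ht
      have h1 : (g ^ k - 1) * ((g ^ k - 1)⁻¹ * (x - y)) = x - y := by
        rw [← mul_assoc, mul_inv_cancel₀ (sub_ne_zero.mpr hgk), one_mul]
      rw [h1, mul_sub, map_sub]
      have h2 : T (g ^ (t : ℕ) * x) = T (g ^ (t : ℕ) * y) := congrFun hΦ ⟨t, ht⟩
      rw [h2, sub_self]
  obtain ⟨v, hv0, hv⟩ := hseam
  let col : K ≃ Fin q := Fintype.equivFinOfCardEq hcardK
  let Xe : Fin (q - 1) → ZMod k → F :=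
    fun r j => v * (((gu : F) ^ m) ^ (r : ℕ) * g ^ (ZMod.val j))
  refine ⟨fun r j => col (T (Xe r j)), ?_⟩
  -- window lemma
  have hwin : ∀ (r : Fin (q - 1)) (j : ZMod k) (s : Fin ℓ),
      T (Xe r (j + (s : ℕ))) = T (g ^ (s : ℕ) * Xe r j) := by
    intro r j s
    have hsk : (s : ℕ) < k := lt_of_lt_of_le s.isLt hkl
    have hval : (j + (s : ℕ) : ZMod k).val = (ZMod.val j + (s : ℕ)) % k := by
      rw [ZMod.val_add, ZMod.val_natCast, Nat.mod_eq_of_lt hsk]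
    have hjlt : ZMod.val j < k := ZMod.val_lt j
    by_cases hcase : ZMod.val j + (s : ℕ) < k
    · have hv2 : (j + (s : ℕ) : ZMod k).val = ZMod.val j + (s : ℕ) := by
        rw [hval, Nat.mod_eq_of_lt hcase]
      have harg : Xe r (j + (s : ℕ)) = g ^ (s : ℕ) * Xe r j := by
        simp only [Xe, hv2, pow_add]
        ring
      rw [harg]
    · have hs1 : (s : ℕ) < ℓ := s.isLt
      set t := ZMod.val j + (s : ℕ) - k with hts
      have htl : t < ℓ - 1 := by omega
      have hvalt : (j + (s : ℕ) : ZMod k).val = t := by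
        rw [hval, show ZMod.val j + (s : ℕ) = t + k by omega, Nat.add_mod_right,
          Nat.mod_eq_of_lt (by omega)]
      simp only [Xe, hvalt]
      have h2 : g ^ (s : ℕ) * g ^ (ZMod.val j) = g ^ k * g ^ t := by
        rw [← pow_add, ← pow_add]
        congr 1
        omega
      have hw : g ^ (s : ℕ) * (v * (((gu : F) ^ m) ^ (r : ℕ) * g ^ (ZMod.val j)))
          = g ^ k * (v * (((gu : F) ^ m) ^ (r : ℕ) * g ^ t)) := by
        calc g ^ (s : ℕ) * (v * (((gu : F) ^ m) ^ (r : ℕ) * g ^ (ZMod.val j)))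
            = (g ^ (s : ℕ) * g ^ (ZMod.val j)) * (v * ((gu : F) ^ m) ^ (r : ℕ)) := by ring
          _ = (g ^ k * g ^ t) * (v * ((gu : F) ^ m) ^ (r : ℕ)) := by rw [h2]
          _ = g ^ k * (v * (((gu : F) ^ m) ^ (r : ℕ) * g ^ t)) := by ring
      rw [hw]
      set w : F := v * (((gu : F) ^ m) ^ (r : ℕ) * g ^ t) with hww
      have hdiff : T (g ^ k * w) - T w = 0 := by
        rw [← map_sub]
        have h3 : g ^ k * w - w = (μ ^ (r : ℕ)) • (g ^ t * ((g ^ k - 1) * v)) := by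
          rw [Algebra.smul_def]
          have hcoe : (algebraMap K F) (μ ^ (r : ℕ)) = ((gu : F) ^ m) ^ (r : ℕ) := by
            push_cast [hμ_def]
            rfl
          rw [hcoe, hww]
          ring
        rw [h3, map_smul, hv t htl, smul_zero]
      exact (sub_eq_zero.mp hdiff).symm
  -- injectivity
  rintro ⟨r, j⟩ ⟨r', j'⟩ hEq
  simp only [Prod.mk.injEq] at hEq ⊢
  have hXX : Xe r j = Xe r' j' := by
    have key : ∀ s : ℕ, s < ℓ → T (g ^ s * (Xe r j - Xe r' j')) = 0 := by
      intro s hs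
      have h5 : col (T (Xe r (j + ((⟨s, hs⟩ : Fin ℓ) : ℕ))))
          = col (T (Xe r' (j' + ((⟨s, hs⟩ : Fin ℓ) : ℕ)))) := congrFun hEq ⟨s, hs⟩
      have h6 := col.injective h5
      rw [hwin r j ⟨s, hs⟩, hwin r' j' ⟨s, hs⟩] at h6
      rw [mul_sub, map_sub, h6, sub_self]
    exact sub_eq_zero.mp (hA _ key)
  have h7 : ((gu : F) ^ m) ^ (r : ℕ) * g ^ (ZMod.val j)
      = ((gu : F) ^ m) ^ ((r' : ℕ)) * g ^ (ZMod.val j') := mul_left_cancel₀ hv0 hXX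
  have h8 : gu ^ (m * (r : ℕ) + ZMod.val j) = gu ^ (m * (r' : ℕ) + ZMod.val j') := by
    apply Units.ext
    rw [Units.val_pow_eq_pow_val, Units.val_pow_eq_pow_val, pow_add, pow_add, pow_mul, pow_mul]
    exact h7
  have hblt : ∀ (r'' : Fin (q - 1)) (j'' : ZMod k),
      m * (r'' : ℕ) + ZMod.val j'' < q ^ ℓ - 1 := by
    intro r'' j''
    have h9 : ZMod.val j'' < m := lt_of_lt_of_le (ZMod.val_lt j'') hk
    have h10 : (r'' : ℕ) + 1 ≤ q - 1 := r''.isLt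
    have h11 : m * ((r'' : ℕ) + 1) ≤ m * (q - 1) := Nat.mul_le_mul_left m h10
    have h12 : m * ((r'' : ℕ) + 1) = m * (r'' : ℕ) + m := by ring
    have h13 : m * (q - 1) = q ^ ℓ - 1 := by rw [mul_comm]; exact hNm
    omega
  have h14 := pow_injOn_Iio_orderOf (x := gu)
    (by rw [Set.mem_Iio, horder]; exact hblt r j)
    (by rw [Set.mem_Iio, horder]; exact hblt r' j') h8
  have hm0 : 0 < m := by
    have h9 : ZMod.val j < m := lt_of_lt_of_le (ZMod.val_lt j) hk
    omega
  have hjm : ZMod.val j < m := lt_of_lt_of_le (ZMod.val_lt j) hk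
  have hj'm : ZMod.val j' < m := lt_of_lt_of_le (ZMod.val_lt j') hk
  have hr : (r : ℕ) = (r' : ℕ) := by
    have hd1 : (m * (r : ℕ) + ZMod.val j) / m = (r : ℕ) := by
      rw [Nat.mul_add_div hm0, Nat.div_eq_of_lt hjm, add_zero]
    have hd2 : (m * (r' : ℕ) + ZMod.val j') / m = (r' : ℕ) := by
      rw [Nat.mul_add_div hm0, Nat.div_eq_of_lt hj'm, add_zero]
    rw [← hd1, ← hd2, h14]
  have hj : ZMod.val j = ZMod.val j' := by
    rw [hr] at h14
    omega
  exact ⟨Fin.ext hr, ZMod.val_injective k hj⟩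

theorem stmt5 (q k ℓ : ℕ) (hq : IsPrimePow q) (hℓ : 1 ≤ ℓ) (hkl : ℓ ≤ k)
    (hk : k ≤ (q ^ ℓ - 1) / (q - 1)) :
    (∃ c : Fin (q - 1) → ZMod k → Fin q, ebugValid q k ℓ (q - 1) c) ∧
    q - 1 ≤ eBugNumber q k ℓ := by
  have hmain := ebug_exists_colouring q k ℓ hq hℓ hkl hk
  refine ⟨hmain, ?_⟩
  haveI : NeZero k := ⟨by omega⟩
  apply le_csSup
  · refine ⟨q ^ ℓ, ?_⟩
    rintro n ⟨c, hc⟩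
    have hcard := Fintype.card_le_of_injective _ hc
    rw [Fintype.card_prod, Fintype.card_fin, ZMod.card, Fintype.card_fun, Fintype.card_fin,
      Fintype.card_fin] at hcard
    calc n = n * 1 := (mul_one n).symm
      _ ≤ n * k := Nat.mul_le_mul_left n (by omega)
      _ ≤ q ^ ℓ := hcard
  · exact hmain
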